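/- Let d ≥ 1 and let f : ℝ^d → ℂ be a Schwartz function. Suppose there is ω₀ > 0 such that 𝓕f(ω) = 0 for every ω with ‖ω‖ ≤ ω₀. Then ∫_{ℝ^d} ‖f(x)‖² dx ≤ (4π²ω₀²)⁻¹ · Σ_{j=1}^{d} ∫_{ℝ^d} |∂_j f(x)|² dx, i.e. the L² norm of f is bounded by (2πω₀)⁻¹ times the L² norm of its gradient (a Poincaré-type inequality on ℝ^d for functions whose Fourier transform vanishes on the ball of radius ω₀). -/

import Mathlib

open MeasureTheory Real
open scoped FourierTransform
open Complex
open scoped ComplexConjugate RealInnerProductSpace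

variable {d : ℕ}

noncomputable section
abbrev V (d : ℕ) := EuclideanSpace ℝ (Fin d)

lemma sq_integrable (g : SchwartzMap (V d) ℂ) : Integrable (fun x ↦ ‖g x‖ ^ 2) := by
  have hC : ∀ x, ‖g x‖ ≤ SchwartzMap.seminorm ℝ 0 0 g := fun x ↦ g.norm_le_seminorm ℝ x
  refine ((g.integrable (μ := volume)).norm.const_mul (SchwartzMap.seminorm ℝ 0 0 g)).mono'
    ?_ ?_
  · exact (g.continuous.norm.pow 2).aestronglyMeasurable
  · filter_upwards with x
    have := hC x
    have h0 : (0:ℝ) ≤ ‖g x‖ := norm_nonneg _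
    simp only [norm_norm, Real.norm_eq_abs, _root_.abs_of_nonneg (pow_nonneg h0 2)]
    calc ‖g x‖ ^ 2 = ‖g x‖ * ‖g x‖ := sq (‖g x‖) ▸ rfl
    _ ≤ (SchwartzMap.seminorm ℝ 0 0 g) * ‖g x‖ := by
        exact mul_le_mul_of_nonneg_right this h0

lemma conj_integrable {u : V d → ℂ} (hu : Integrable u) :
    Integrable (fun x ↦ conj (u x)) := by
  refine hu.norm.mono' ?_ ?_
  · exact (Complex.continuous_conj.comp_aestronglyMeasurable hu.1)
  · filter_upwards with x; simp

lemma fourier_conj (u : V d → ℂ) (w : V d) :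
    𝓕 (fun x ↦ conj (u x)) w = conj (𝓕⁻ u w) := by
  rw [Real.fourier_eq', Real.fourierInv_eq', ← integral_conj]
  congr 1 with v
  simp only [smul_eq_mul, map_mul, ← Complex.exp_conj]
  congr 2
  simp [Complex.ext_iff]

lemma plancherel (g : SchwartzMap (V d) ℂ) :
    ∫ x, ‖g x‖ ^ 2 = ∫ w, ‖𝓕 (⇑g) w‖ ^ 2 := by
  set G := SchwartzMap.fourierTransformCLM ℂ g with hG
  have hGapp : ⇑G = 𝓕 ⇑g := by rw [hG]; rfl
  have hGint : Integrable (⇑G) := G.integrable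
  have hint : Integrable (fun ξ ↦ (starRingEnd ℂ) (G ξ)) := conj_integrable hGint
  have key := VectorFourier.integral_fourierIntegral_smul_eq_flip (L := innerₗ (V d)) (μ := (volume : Measure (V d))) (ν := (volume : Measure (V d)))
    Real.continuous_fourierChar continuous_inner g.integrable hint
  rw [flip_innerₗ] at key
  have h𝓕h : ∀ x, VectorFourier.fourierIntegral 𝐞 volume (innerₗ (V d))
      (fun ξ ↦ conj (G ξ)) x = conj (g x) := by
    intro x
    have : VectorFourier.fourierIntegral 𝐞 volume (innerₗ (V d))
        (fun ξ ↦ conj (G ξ)) x = 𝓕 (fun ξ ↦ conj (G ξ)) x := rfl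
    rw [this, fourier_conj, hGapp]
    congr 1
    exact congrFun (g.continuous.fourierInv_fourier_eq g.integrable (hGapp ▸ hGint)) x
  have e1 : ∫ w, ((‖𝓕 ⇑g w‖^2 : ℝ) : ℂ) = ((∫ w, ‖𝓕 ⇑g w‖^2 : ℝ) : ℂ) :=
    integral_ofReal
  have e2 : ∫ x, ((‖g x‖^2 : ℝ) : ℂ) = ((∫ x, ‖g x‖^2 : ℝ) : ℂ) :=
    integral_ofReal
  have L : ∫ w, ((‖𝓕 ⇑g w‖^2 : ℝ) : ℂ) = ∫ x, ((‖g x‖^2 : ℝ) : ℂ) := by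
    calc ∫ w, ((‖𝓕 ⇑g w‖^2 : ℝ) : ℂ)
        = ∫ ξ, (𝓕 ⇑g ξ) • conj (G ξ) := by
          congr 1 with ξ
          rw [smul_eq_mul, ← hGapp, Complex.mul_conj]
          simp [Complex.normSq_eq_norm_sq]
      _ = ∫ x, g x • (VectorFourier.fourierIntegral 𝐞 volume (innerₗ (V d))
            (fun ξ ↦ conj (G ξ)) x) := key
      _ = ∫ x, ((‖g x‖^2 : ℝ) : ℂ) := by
          congr 1 with x
          rw [h𝓕h x, smul_eq_mul, Complex.mul_conj]
          simp [Complex.normSq_eq_norm_sq]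
  exact (Complex.ofReal_inj.mp ((e1.symm.trans (L.trans e2)))).symm

lemma fourier_clm_apply {u : V d → (V d →L[ℝ] ℂ)} (hu : Integrable u)
    (ω m : V d) : (𝓕 u ω) m = 𝓕 (fun x ↦ u x m) ω := by
  rw [Real.fourier_eq, Real.fourier_eq,
    ContinuousLinearMap.integral_apply ((Real.fourierIntegral_convergent_iff ω).2 hu)]
  rfl

lemma norm_fourier_pderiv (f : SchwartzMap (V d) ℂ) (j : Fin d) (ω : V d) :
    ‖𝓕 (⇑(LineDeriv.lineDerivOp (EuclideanSpace.single j (1:ℝ) : V d) f)) ω‖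
      = (2 * π) * |ω j| * ‖𝓕 (⇑f) ω‖ := by
  have heq : ⇑(SchwartzMap.fderivCLM ℝ (V d) ℂ f) = fderiv ℝ ⇑f :=
    funext (SchwartzMap.fderivCLM_apply ℝ f)
  have hfd_int : Integrable (fderiv ℝ ⇑f) := heq ▸ (SchwartzMap.fderivCLM ℝ (V d) ℂ f).integrable
  have key : 𝓕 (fderiv ℝ ⇑f) = VectorFourier.fourierSMulRight (-(innerSL ℝ)) (𝓕 ⇑f) :=
    Real.fourier_fderiv f.integrable f.differentiable hfd_int
  have h1 : 𝓕 (⇑(LineDeriv.lineDerivOp (EuclideanSpace.single j (1:ℝ) : V d) f)) ω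
      = (𝓕 (fderiv ℝ ⇑f) ω) (EuclideanSpace.single j 1) := by
    rw [fourier_clm_apply hfd_int]
    congr 1 with x
  rw [h1, key, VectorFourier.fourierSMulRight_apply]
  simp only [ContinuousLinearMap.neg_apply, innerSL_apply_apply,
    EuclideanSpace.inner_single_right, RCLike.inner_apply, map_one, one_mul, neg_smul, smul_neg,
    neg_neg, norm_smul, starRingEnd_apply, star_trivial,
    Real.norm_eq_abs, map_mul, norm_mul, Complex.norm_I, Complex.norm_two, Complex.norm_real,
    _root_.abs_of_pos pi_pos]
  rw [innerSL_apply_apply, EuclideanSpace.inner_single_right]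
  simp only [one_mul, starRingEnd_apply, star_trivial]
  ring

/-- Poincaré-type inequality on `ℝ^d` for Schwartz functions whose Fourier transform
vanishes on the ball of radius `ω₀`. -/
theorem poincare_of_fourier_vanishing
    (d : ℕ) (hd : 1 ≤ d) (f : SchwartzMap (EuclideanSpace ℝ (Fin d)) ℂ)
    (ω₀ : ℝ) (hω₀ : 0 < ω₀)
    (hvanish : ∀ ω : EuclideanSpace ℝ (Fin d), ‖ω‖ ≤ ω₀ → 𝓕 (⇑f) ω = 0) :
    ∫ x, ‖f x‖ ^ 2 ≤
      (4 * π ^ 2 * ω₀ ^ 2)⁻¹ *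
        ∑ j : Fin d, ∫ x, ‖fderiv ℝ (⇑f) x (EuclideanSpace.single j 1)‖ ^ 2 := by
  have hj : ∀ j : Fin d, ∫ x, ‖fderiv ℝ (⇑f) x (EuclideanSpace.single j 1)‖ ^ 2
      = ∫ w : V d, ((2*π) * |w j| * ‖𝓕 (⇑f) w‖)^2 := by
    intro j
    have e : ∫ x, ‖fderiv ℝ (⇑f) x (EuclideanSpace.single j 1)‖ ^ 2
        = ∫ x, ‖(LineDeriv.lineDerivOp (EuclideanSpace.single j (1:ℝ) : V d) f) x‖^2 := by
      congr 1 with x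
    rw [e, plancherel]
    simp only [norm_fourier_pderiv]
  have hFsq : Integrable (fun w : V d ↦ ‖𝓕 (⇑f) w‖^2) := by
    have := sq_integrable (SchwartzMap.fourierTransformCLM ℂ f)
    simpa [SchwartzMap.fourier_coe] using this
  have hjint : ∀ j : Fin d, Integrable (fun w : V d ↦ ((2*π) * |w j| * ‖𝓕 (⇑f) w‖)^2) := by
    intro j
    have h2 := sq_integrable (SchwartzMap.fourierTransformCLM ℂ
      (LineDeriv.lineDerivOp (EuclideanSpace.single j (1:ℝ) : V d) f))
    simp only [SchwartzMap.fourierTransformCLM_apply] at h2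
    refine h2.congr (Filter.Eventually.of_forall fun w ↦ ?_)
    show ‖𝓕 (⇑(LineDeriv.lineDerivOp (EuclideanSpace.single j (1:ℝ) : V d) f)) w‖ ^ 2 = _
    rw [norm_fourier_pderiv]
  have hsum : ∀ w : V d, ∑ j : Fin d, ((2*π) * |w j| * ‖𝓕 (⇑f) w‖)^2
      = 4*π^2*‖w‖^2*‖𝓕 (⇑f) w‖^2 := by
    intro w
    have hn : ‖w‖^2 = ∑ j : Fin d, (w j)^2 := by
      rw [EuclideanSpace.norm_eq, Real.sq_sqrt (Finset.sum_nonneg fun i _ ↦ sq_nonneg _)]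
      simp [_root_.sq_abs]
    have h1 : ∀ j : Fin d, ((2*π) * |w j| * ‖𝓕 (⇑f) w‖)^2
        = (4*π^2*‖𝓕 (⇑f) w‖^2) * (w j)^2 := by
      intro j; rw [mul_pow, mul_pow, _root_.sq_abs]; ring
    rw [Finset.sum_congr rfl (fun j _ => h1 j), ← Finset.mul_sum, ← hn]; ring
  have big : ∑ j : Fin d, ∫ x, ‖fderiv ℝ (⇑f) x (EuclideanSpace.single j 1)‖ ^ 2
      = ∫ w : V d, 4*π^2*‖w‖^2*‖𝓕 (⇑f) w‖^2 := by
    rw [Finset.sum_congr rfl (fun j _ => hj j), ← integral_finset_sum _ (fun j _ ↦ hjint j)]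
    congr 1 with w; exact hsum w
  have mono : ∫ w : V d, (4*π^2*ω₀^2) * ‖𝓕 (⇑f) w‖^2
      ≤ ∫ w : V d, 4*π^2*‖w‖^2*‖𝓕 (⇑f) w‖^2 := by
    refine integral_mono (hFsq.const_mul _) ?_ ?_
    · exact (integrable_finset_sum _ (fun j _ ↦ hjint j)).congr
        (Filter.Eventually.of_forall hsum)
    · intro w
      dsimp only
      by_cases h : ‖w‖ ≤ ω₀
      · rw [hvanish w h]; simp
      · push_neg at h
        have h2 : ω₀^2 ≤ ‖w‖^2 := by nlinarith [norm_nonneg w]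
        nlinarith [mul_le_mul_of_nonneg_right h2
          (mul_nonneg (by positivity : (0:ℝ) ≤ 4*π^2) (sq_nonneg ‖𝓕 (⇑f) w‖))]
  have key2 : (4*π^2*ω₀^2) * ∫ w : V d, ‖𝓕 (⇑f) w‖^2
      ≤ ∑ j : Fin d, ∫ x, ‖fderiv ℝ (⇑f) x (EuclideanSpace.single j 1)‖ ^ 2 := by
    rw [← integral_const_mul]
    exact mono.trans big.symm.le
  have hpos : (0:ℝ) < 4*π^2*ω₀^2 := by positivity
  rw [plancherel f]
  have e : ∫ w : V d, ‖𝓕 (⇑f) w‖^2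
      = (4*π^2*ω₀^2)⁻¹ * ((4*π^2*ω₀^2) * ∫ w : V d, ‖𝓕 (⇑f) w‖^2) := by
    field_simp
  rw [e]
  exact mul_le_mul_of_nonneg_left key2 (by positivity)
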